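/- For every k ≥ 0, the number of indecomposable permutations with exactly k inversions that avoid the pattern 132 equals the number of partitions of k. -/

import Mathlib

def inversions {n : ℕ} (π : Equiv.Perm (Fin n)) : ℕ :=
  (Finset.univ.filter fun p : Fin n × Fin n => p.1 < p.2 ∧ π p.2 < π p.1).card

def Decomposable {n : ℕ} (π : Equiv.Perm (Fin n)) : Prop :=
  ∃ j : ℕ, 0 < j ∧ j < n ∧ ∀ i : Fin n, (i : ℕ) < j → (π i : ℕ) < j

def Indecomposable {n : ℕ} (π : Equiv.Perm (Fin n)) : Prop :=
  0 < n ∧ ¬ Decomposable π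

def invTable {n : ℕ} (π : Equiv.Perm (Fin n)) (i : Fin n) : ℕ :=
  (Finset.univ.filter fun j : Fin n => i < j ∧ π j < π i).card

def Avoids123 {n : ℕ} (π : Equiv.Perm (Fin n)) : Prop :=
  ¬ ∃ i j k : Fin n, i < j ∧ j < k ∧ π i < π j ∧ π j < π k

def Avoids132 {n : ℕ} (π : Equiv.Perm (Fin n)) : Prop :=
  ¬ ∃ i j k : Fin n, i < j ∧ j < k ∧ π i < π k ∧ π k < π j

def Avoids213 {n : ℕ} (π : Equiv.Perm (Fin n)) : Prop :=
  ¬ ∃ i j k : Fin n, i < j ∧ j < k ∧ π j < π i ∧ π i < π k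

def Avoids231 {n : ℕ} (π : Equiv.Perm (Fin n)) : Prop :=
  ¬ ∃ i j k : Fin n, i < j ∧ j < k ∧ π k < π i ∧ π i < π j

def Avoids312 {n : ℕ} (π : Equiv.Perm (Fin n)) : Prop :=
  ¬ ∃ i j k : Fin n, i < j ∧ j < k ∧ π j < π k ∧ π k < π i

def Avoids321 {n : ℕ} (π : Equiv.Perm (Fin n)) : Prop :=
  ¬ ∃ i j k : Fin n, i < j ∧ j < k ∧ π k < π j ∧ π j < π i

def LTRMax {n : ℕ} (π : Equiv.Perm (Fin n)) (k : Fin n) : Prop :=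
  ∀ i : Fin n, i < k → π i < π k

def revComp {n : ℕ} (π : Equiv.Perm (Fin n)) : Equiv.Perm (Fin n) :=
  Fin.revPerm * π * Fin.revPerm

namespace Aux

open Finset List

variable {n : ℕ}

lemma card_filter_val_lt (v : ℕ) (hv : v ≤ n) :
    (Finset.univ.filter fun y : Fin n => (y : ℕ) < v).card = v := by
  rw [← Finset.card_range v]
  exact Finset.card_bij' (fun y _ => (y : ℕ)) (fun m hm => ⟨m, by
      simp only [Finset.mem_range] at hm; omega⟩)
    (fun a ha => by simpa using (Finset.mem_filter.mp ha).2)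
    (fun m hm => by simpa using Finset.mem_range.mp hm)
    (fun a _ => rfl) (fun m _ => rfl)

lemma card_pi_lt (π : Equiv.Perm (Fin n)) (v : Fin n) :
    (Finset.univ.filter fun j : Fin n => π j < v).card = (v : ℕ) := by
  have h : (Finset.univ.filter fun j : Fin n => π j < v)
      = (Finset.univ.filter fun y : Fin n => (y : ℕ) < (v : ℕ)).image π.symm := by
    ext j
    simp only [Finset.mem_filter, Finset.mem_univ, true_and, Finset.mem_image]
    constructor
    · intro h; exact ⟨π j, Fin.lt_def.mp h, by simp⟩
    · rintro ⟨y, hy, rfl⟩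
      rw [Equiv.apply_symm_apply]
      exact Fin.lt_def.mpr hy
  rw [h, Finset.card_image_of_injective _ π.symm.injective,
    card_filter_val_lt _ (le_of_lt v.isLt)]

lemma invTable_lt (π : Equiv.Perm (Fin n)) (i : Fin n) : invTable π i + (i : ℕ) < n := by
  have h1 : invTable π i ≤ (Finset.Ioi i).card := by
    apply Finset.card_le_card
    intro j hj
    simp only [Finset.mem_filter, Finset.mem_univ, true_and] at hj
    simpa using hj.1
  rw [Fin.card_Ioi] at h1
  have := i.isLt
  omega

lemma val_le_invTable_add (π : Equiv.Perm (Fin n)) (i : Fin n) :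
    (π i : ℕ) ≤ invTable π i + (i : ℕ) := by
  have h := card_pi_lt π (π i)
  have hsub : (Finset.univ.filter fun j : Fin n => π j < π i)
      ⊆ (Finset.univ.filter fun j : Fin n => i < j ∧ π j < π i)
        ∪ (Finset.univ.filter fun j : Fin n => (j : ℕ) < (i : ℕ)) := by
    intro j hj
    simp only [Finset.mem_filter, Finset.mem_univ, true_and] at hj
    rcases lt_trichotomy i j with h' | h' | h'
    · exact Finset.mem_union_left _ (Finset.mem_filter.mpr ⟨Finset.mem_univ _, h', hj⟩)
    · exact absurd (h' ▸ hj) (lt_irrefl _)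
    · exact Finset.mem_union_right _
        (Finset.mem_filter.mpr ⟨Finset.mem_univ _, Fin.lt_def.mp h'⟩)
  have hle := le_trans (Finset.card_le_card hsub) (Finset.card_union_le _ _)
  rw [h, card_filter_val_lt _ (le_of_lt i.isLt)] at hle
  exact hle

lemma inversions_eq_sum (π : Equiv.Perm (Fin n)) :
    inversions π = ∑ i : Fin n, invTable π i := by
  unfold inversions invTable
  rw [Finset.card_eq_sum_card_fiberwise
    (f := fun p : Fin n × Fin n => p.1) (t := Finset.univ) (fun _ _ => Finset.mem_univ _)]
  refine Finset.sum_congr rfl fun i _ => ?_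
  rw [Finset.filter_filter]
  refine Finset.card_bij' (fun p _ => p.2) (fun j _ => (i, j)) ?_ ?_ ?_ ?_
  · intro p hp
    simp only [Finset.mem_filter, Finset.mem_univ, true_and] at hp ⊢
    obtain ⟨⟨h1, h2⟩, h3⟩ := hp
    subst h3; exact ⟨h1, h2⟩
  · intro j hj
    simp only [Finset.mem_filter, Finset.mem_univ, true_and] at hj
    exact Finset.mem_filter.mpr ⟨Finset.mem_univ _, ⟨hj.1, hj.2⟩, rfl⟩
  · intro p hp
    simp only [Finset.mem_filter, Finset.mem_univ, true_and] at hp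
    exact (Prod.ext hp.2.symm rfl)
  · intro j _
    rfl


lemma antitone_of_avoids132 (π : Equiv.Perm (Fin n)) (h : Avoids132 π) :
    ∀ i j : Fin n, i ≤ j → invTable π j ≤ invTable π i := by
  intro i j hij
  rcases eq_or_lt_of_le hij with rfl | hij
  · exact le_rfl
  apply Finset.card_le_card
  intro l hl
  simp only [Finset.mem_filter, Finset.mem_univ, true_and] at hl ⊢
  refine ⟨lt_trans hij hl.1, ?_⟩
  by_contra hc
  have hne : π i ≠ π l := fun he => absurd (π.injective he) (ne_of_lt (lt_trans hij hl.1))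
  have : π i < π l := lt_of_le_of_ne (not_lt.mp hc) hne
  exact h ⟨i, j, l, hij, hl.1, this, hl.2⟩

lemma avoids132_of_antitone (π : Equiv.Perm (Fin n))
    (h : ∀ i j : Fin n, i ≤ j → invTable π j ≤ invTable π i) : Avoids132 π := by
  rintro ⟨i, j, k, hij, hjk, h1, h2⟩
  have key : ∀ d : ℕ, ∀ i j k : Fin n, i < j → j < k → π i < π k → π k < π j →
      (j : ℕ) - (i : ℕ) ≤ d → False := by
    intro d
    induction d with
    | zero =>
      intro i j k hij _ _ _ hd
      have := Fin.lt_def.mp hij; omega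
    | succ d ih =>
      intro i j k hij hjk h1 h2 hd
      by_cases hadj : (i : ℕ) + 1 = (j : ℕ)
      · have hmono := h i j (le_of_lt hij)
        have hsub : (Finset.univ.filter fun l : Fin n => i < l ∧ π l < π i)
            ⊆ (Finset.univ.filter fun l : Fin n => j < l ∧ π l < π j) := by
          intro l hl
          simp only [Finset.mem_filter, Finset.mem_univ, true_and] at hl ⊢
          obtain ⟨hil, hpl⟩ := hl
          have hlj : (l : ℕ) ≠ (j : ℕ) := by
            intro hlj
            have : l = j := Fin.ext hlj
            subst this
            exact absurd (lt_trans hpl (lt_trans h1 h2)) (lt_irrefl _)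
          have hjl : j < l := by
            rw [Fin.lt_def] at hil ⊢
            omega
          exact ⟨hjl, lt_trans hpl (lt_trans h1 h2)⟩
        have hkmem : k ∈ (Finset.univ.filter fun l : Fin n => j < l ∧ π l < π j) := by
          simp only [Finset.mem_filter, Finset.mem_univ, true_and]
          exact ⟨hjk, h2⟩
        have hknot : k ∉ (Finset.univ.filter fun l : Fin n => i < l ∧ π l < π i) := by
          simp only [Finset.mem_filter, Finset.mem_univ, true_and, not_and]
          intro _
          exact not_lt.mpr (le_of_lt h1)
        have : invTable π i < invTable π j :=
          Finset.card_lt_card ((Finset.ssubset_iff_of_subset hsub).mpr ⟨k, hkmem, hknot⟩)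
        exact absurd this (not_lt.mpr hmono)
      · have hijv := Fin.lt_def.mp hij
        have him : (i : ℕ) + 1 < n := by
          have := j.isLt; omega
        set m : Fin n := ⟨(i : ℕ) + 1, him⟩ with hm
        have him' : i < m := by rw [Fin.lt_def]; simp [hm]
        have hmj : m < j := by rw [Fin.lt_def]; simp [hm]; omega
        rcases lt_trichotomy (π m) (π k) with hc | hc | hc
        · exact ih m j k hmj hjk hc h2 (by
            have hmv : (m : ℕ) = (i : ℕ) + 1 := rfl
            omega)
        · have : m = k := π.injective hc
          subst this
          exact absurd (lt_trans hmj hjk) (lt_irrefl _)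
        · exact ih i m k him' (lt_trans hmj hjk) h1 hc (by
            have hmv : (m : ℕ) = (i : ℕ) + 1 := rfl
            have hmjv := Fin.lt_def.mp hmj
            omega)
  exact key ((j : ℕ) - (i : ℕ)) i j k hij hjk h1 h2 le_rfl

lemma avoids132_iff (π : Equiv.Perm (Fin n)) :
    Avoids132 π ↔ ∀ i j : Fin n, i ≤ j → invTable π j ≤ invTable π i :=
  ⟨antitone_of_avoids132 π, avoids132_of_antitone π⟩

lemma decomposable_iff (π : Equiv.Perm (Fin n)) :
    Decomposable π ↔
      ∃ j : ℕ, 0 < j ∧ j < n ∧ ∀ i : Fin n, (i : ℕ) < j → invTable π i + (i : ℕ) < j := by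
  constructor
  · rintro ⟨j, hj0, hjn, hmap⟩
    refine ⟨j, hj0, hjn, fun i hi => ?_⟩
    have honto : ∀ l : Fin n, (π l : ℕ) < j → (l : ℕ) < j := by
      set S := Finset.univ.filter (fun x : Fin n => (x : ℕ) < j) with hS
      have himg : S.image π ⊆ S := by
        intro y hy
        simp only [hS, Finset.mem_image, Finset.mem_filter, Finset.mem_univ, true_and] at hy ⊢
        obtain ⟨x, hx, rfl⟩ := hy
        exact hmap x hx
      have heq : S.image π = S := Finset.eq_of_subset_of_card_le himg
        (le_of_eq (Finset.card_image_of_injective _ π.injective).symm)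
      intro l hl
      have hmem : π l ∈ S := by simp [hS, hl]
      rw [← heq] at hmem
      obtain ⟨x, hx, hxl⟩ := Finset.mem_image.mp hmem
      have : x = l := π.injective hxl
      subst this
      simpa [hS] using hx
    have hb1 : invTable π i ≤
        ((Finset.univ.filter fun l : Fin n => (i : ℕ) < (l : ℕ) ∧ (l : ℕ) < j)).card := by
      apply Finset.card_le_card
      intro l hl
      simp only [Finset.mem_filter, Finset.mem_univ, true_and] at hl ⊢
      exact ⟨Fin.lt_def.mp hl.1, honto l (lt_trans (Fin.lt_def.mp hl.2) (hmap i hi))⟩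
    have hb2 : ((Finset.univ.filter fun l : Fin n => (i : ℕ) < (l : ℕ) ∧ (l : ℕ) < j)).card
        ≤ j - (i : ℕ) - 1 := by
      rw [← Nat.card_Ioo (i : ℕ) j]
      apply Finset.card_le_card_of_injOn Fin.val
      · intro l hl
        simp only [Finset.coe_filter, Finset.mem_univ, true_and, Set.mem_setOf_eq] at hl
        exact Finset.mem_Ioo.mpr hl
      · intro a _ b _ hab
        exact Fin.ext hab
    omega
  · rintro ⟨j, hj0, hjn, hcode⟩
    exact ⟨j, hj0, hjn, fun i hi => lt_of_le_of_lt (val_le_invTable_add π i) (hcode i hi)⟩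


def extFun (v : Fin (n + 1)) (σ : Equiv.Perm (Fin n)) : Fin (n + 1) → Fin (n + 1) :=
  Fin.cases v (fun i => v.succAbove (σ i))

lemma extFun_injective (v : Fin (n + 1)) (σ : Equiv.Perm (Fin n)) :
    Function.Injective (extFun v σ) := by
  intro a b hab
  induction a using Fin.cases with
  | zero =>
    induction b using Fin.cases with
    | zero => rfl
    | succ y =>
      simp only [extFun, Fin.cases_zero, Fin.cases_succ] at hab
      exact absurd hab.symm (Fin.succAbove_ne v (σ y))
  | succ x =>
    induction b using Fin.cases with
    | zero =>
      simp only [extFun, Fin.cases_zero, Fin.cases_succ] at hab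
      exact absurd hab (Fin.succAbove_ne v (σ x))
    | succ y =>
      simp only [extFun, Fin.cases_succ] at hab
      have := σ.injective (Fin.succAbove_right_injective hab)
      rw [this]

noncomputable def extendPerm (v : Fin (n + 1)) (σ : Equiv.Perm (Fin n)) :
    Equiv.Perm (Fin (n + 1)) :=
  Equiv.ofBijective (extFun v σ) ((Finite.injective_iff_bijective).mp (extFun_injective v σ))

@[simp] lemma extendPerm_zero (v : Fin (n + 1)) (σ : Equiv.Perm (Fin n)) :
    extendPerm v σ 0 = v := rfl

@[simp] lemma extendPerm_succ (v : Fin (n + 1)) (σ : Equiv.Perm (Fin n)) (i : Fin n) :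
    extendPerm v σ i.succ = v.succAbove (σ i) := by
  simp [extendPerm, Equiv.ofBijective_apply, extFun]

lemma invTable_extendPerm_zero (v : Fin (n + 1)) (σ : Equiv.Perm (Fin n)) :
    invTable (extendPerm v σ) 0 = (v : ℕ) := by
  unfold invTable
  have hset : (Finset.univ.filter fun j : Fin (n + 1) => 0 < j ∧ extendPerm v σ j < extendPerm v σ 0)
      = (Finset.univ.filter fun x : Fin n => (σ x : ℕ) < (v : ℕ)).image Fin.succ := by
    ext j
    simp only [Finset.mem_filter, Finset.mem_univ, true_and, Finset.mem_image]
    constructor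
    · rintro ⟨hj0, hjv⟩
      obtain ⟨x, rfl⟩ := Fin.eq_succ_of_ne_zero (Fin.pos_iff_ne_zero.mp hj0)
      refine ⟨x, ?_, rfl⟩
      rw [extendPerm_succ, extendPerm_zero] at hjv
      have := (Fin.succAbove_lt_iff_castSucc_lt v (σ x)).mp hjv
      simpa [Fin.lt_def] using this
    · rintro ⟨x, hx, rfl⟩
      refine ⟨Fin.succ_pos x, ?_⟩
      rw [extendPerm_succ, extendPerm_zero]
      apply (Fin.succAbove_lt_iff_castSucc_lt v (σ x)).mpr
      simpa [Fin.lt_def] using hx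
  rw [hset, Finset.card_image_of_injective _ (Fin.succ_injective n)]
  have : (Finset.univ.filter fun x : Fin n => (σ x : ℕ) < (v : ℕ))
      = (Finset.univ.filter fun y : Fin n => (y : ℕ) < (v : ℕ)).image σ.symm := by
    ext x
    simp only [Finset.mem_filter, Finset.mem_univ, true_and, Finset.mem_image]
    constructor
    · intro hx; exact ⟨σ x, hx, by simp⟩
    · rintro ⟨y, hy, rfl⟩; simpa using hy
  rw [this, Finset.card_image_of_injective _ σ.symm.injective,
    card_filter_val_lt _ (by omega : (v : ℕ) ≤ n)]

lemma invTable_extendPerm_succ (v : Fin (n + 1)) (σ : Equiv.Perm (Fin n)) (i : Fin n) :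
    invTable (extendPerm v σ) i.succ = invTable σ i := by
  unfold invTable
  have hset : (Finset.univ.filter fun j : Fin (n + 1) =>
        i.succ < j ∧ extendPerm v σ j < extendPerm v σ i.succ)
      = (Finset.univ.filter fun x : Fin n => i < x ∧ σ x < σ i).image Fin.succ := by
    ext j
    simp only [Finset.mem_filter, Finset.mem_univ, true_and, Finset.mem_image]
    constructor
    · rintro ⟨hj0, hjv⟩
      have hjne : j ≠ 0 := by
        intro hj; subst hj
        exact absurd hj0 (by simp [Fin.lt_def])
      obtain ⟨x, rfl⟩ := Fin.eq_succ_of_ne_zero hjne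
      refine ⟨x, ⟨?_, ?_⟩, rfl⟩
      · exact Fin.succ_lt_succ_iff.mp hj0
      · rw [extendPerm_succ, extendPerm_succ] at hjv
        exact (Fin.succAbove_lt_succAbove_iff (p := v)).mp hjv
    · rintro ⟨x, ⟨hx1, hx2⟩, rfl⟩
      refine ⟨Fin.succ_lt_succ_iff.mpr hx1, ?_⟩
      rw [extendPerm_succ, extendPerm_succ]
      exact (Fin.succAbove_lt_succAbove_iff (p := v)).mpr hx2
  rw [hset, Finset.card_image_of_injective _ (Fin.succ_injective n)]

lemma exists_extend (π : Equiv.Perm (Fin (n + 1))) :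
    ∃ (v : Fin (n + 1)) (σ : Equiv.Perm (Fin n)), π = extendPerm v σ := by
  have hex : ∀ x : Fin n, ∃ y : Fin n, (π 0).succAbove y = π x.succ := by
    intro x
    apply Fin.exists_succAbove_eq
    intro h
    exact absurd (π.injective h) (Fin.succ_ne_zero x)
  choose f hf using hex
  have hfinj : Function.Injective f := by
    intro a b hab
    have : (π 0).succAbove (f a) = (π 0).succAbove (f b) := by rw [hab]
    rw [hf a, hf b] at this
    exact Fin.succ_injective n (π.injective this)
  let σ : Equiv.Perm (Fin n) := Equiv.ofBijective f ((Finite.injective_iff_bijective).mp hfinj)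
  refine ⟨π 0, σ, ?_⟩
  ext j
  induction j using Fin.cases with
  | zero => simp
  | succ x =>
    rw [extendPerm_succ]
    exact congrArg Fin.val (hf x).symm

lemma invTable_injective : ∀ {n : ℕ} (π σ : Equiv.Perm (Fin n)),
    invTable π = invTable σ → π = σ := by
  intro n
  induction n with
  | zero => intro π σ _; exact Subsingleton.elim π σ
  | succ n ih =>
    intro π σ hps
    obtain ⟨v, τ, rfl⟩ := exists_extend π
    obtain ⟨v', τ', rfl⟩ := exists_extend σ
    have hv : v = v' := by
      have h0 := congrFun hps 0
      rw [invTable_extendPerm_zero, invTable_extendPerm_zero] at h0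
      exact Fin.ext h0
    subst hv
    have hτ : τ = τ' := by
      apply ih
      funext i
      have := congrFun hps i.succ
      rwa [invTable_extendPerm_succ, invTable_extendPerm_succ] at this
    rw [hτ]

lemma exists_perm_of_code : ∀ {n : ℕ} (c : Fin n → ℕ), (∀ i, c i + (i : ℕ) < n) →
    ∃ π : Equiv.Perm (Fin n), ∀ i, invTable π i = c i := by
  intro n
  induction n with
  | zero => intro c _; exact ⟨1, fun i => absurd i.isLt (by omega)⟩
  | succ n ih =>
    intro c hc
    have hv : c 0 < n + 1 := by have := hc 0; simpa using this
    obtain ⟨σ, hσ⟩ := ih (fun i => c i.succ) (fun i => by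
      have := hc i.succ
      simp only [Fin.val_succ] at this
      show c i.succ + (i : ℕ) < n
      omega)
    refine ⟨extendPerm ⟨c 0, hv⟩ σ, fun i => ?_⟩
    induction i using Fin.cases with
    | zero => rw [invTable_extendPerm_zero]
    | succ x => rw [invTable_extendPerm_succ, hσ]


lemma sum_filter_ne_zero (X : List ℕ) : (X.filter (fun x => x ≠ 0)).sum = X.sum := by
  induction X with
  | nil => rfl
  | cons a t ih =>
    by_cases ha : a = 0
    · subst ha
      rw [List.filter_cons, if_neg (by simp), List.sum_cons, ih]
      omega
    · rw [List.filter_cons, if_pos (by simp [ha]), List.sum_cons, List.sum_cons, ih]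

lemma sorted_filter_append (X : List ℕ) (h : X.Pairwise (· ≥ ·)) :
    X.filter (fun x => x ≠ 0)
      ++ List.replicate (X.length - (X.filter (fun x => x ≠ 0)).length) 0 = X := by
  induction X with
  | nil => rfl
  | cons a t ih =>
    have ht := h.of_cons
    by_cases ha : a = 0
    · subst ha
      have hall : ∀ x ∈ t, x = 0 := by
        intro x hx
        have := (List.pairwise_cons.mp h).1 x hx
        omega
      have hfilt : (0 :: t).filter (fun x => x ≠ 0) = [] := by
        rw [List.filter_eq_nil_iff]
        intro x hx
        rcases List.mem_cons.mp hx with rfl | hx'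
        · simp
        · simp [hall x hx']
      rw [hfilt]
      simp only [List.nil_append, List.length_nil, Nat.sub_zero]
      refine (List.eq_replicate_iff.mpr ⟨rfl, ?_⟩).symm
      intro x hx
      rcases List.mem_cons.mp hx with rfl | hx'
      · rfl
      · exact hall x hx'
    · have hfilt : (a :: t).filter (fun x => x ≠ 0) = a :: t.filter (fun x => x ≠ 0) := by
        simp [List.filter_cons, ha]
      rw [hfilt]
      simp only [List.length_cons, List.cons_append]
      have hlen : (t.filter (fun x => x ≠ 0)).length ≤ t.length := List.length_filter_le _ _
      rw [show t.length + 1 - ((t.filter (fun x => x ≠ 0)).length + 1)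
          = t.length - (t.filter (fun x => x ≠ 0)).length by omega]
      rw [ih ht]

lemma getD_antitone {L : List ℕ} (hs : L.Pairwise (· ≥ ·)) :
    ∀ i j : ℕ, i ≤ j → L.getD j 0 ≤ L.getD i 0 := by
  intro i j hij
  rcases eq_or_lt_of_le hij with rfl | hlt
  · exact le_rfl
  by_cases hj : j < L.length
  · have hi : i < L.length := lt_trans hlt hj
    rw [List.getD_eq_getElem _ _ hj, List.getD_eq_getElem _ _ hi]
    exact List.pairwise_iff_getElem.mp hs i j hi hj hlt
  · rw [List.getD_eq_default _ _ (not_lt.mp hj)]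
    exact Nat.zero_le _

lemma sum_range_len (L : List ℕ) :
    ∑ i ∈ Finset.range L.length, L.getD i 0 = L.sum := by
  induction L with
  | nil => simp
  | cons a t ih =>
    rw [List.length_cons, Finset.sum_range_succ', List.sum_cons]
    simp only [List.getD_cons_succ, List.getD_cons_zero]
    rw [ih]
    omega

lemma sum_range_getD (L : List ℕ) (n : ℕ) (h : L.length ≤ n) :
    ∑ i ∈ Finset.range n, L.getD i 0 = L.sum := by
  rw [← Finset.sum_subset (Finset.range_subset_range.mpr h)
    (fun x _ hx => List.getD_eq_default _ _ (by
      simp only [Finset.mem_range, not_lt] at hx ⊢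
      omega))]
  exact sum_range_len L

/-! ### The size function -/

def bigN (L : List ℕ) : ℕ :=
  max 1 ((Finset.range L.length).sup fun i => L.getD i 0 + i + 1)

lemma length_le_bigN (L : List ℕ) : L.length ≤ bigN L := by
  rcases Nat.eq_zero_or_pos L.length with h | h
  · rw [h]; exact Nat.zero_le _
  · have hmem : L.length - 1 ∈ Finset.range L.length := by
      simp only [Finset.mem_range]; omega
    have h1 : L.getD (L.length - 1) 0 + (L.length - 1) + 1
        ≤ (Finset.range L.length).sup fun i => L.getD i 0 + i + 1 := Finset.le_sup (f := fun i => L.getD i 0 + i + 1) hmem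
    have h2 : ((Finset.range L.length).sup fun i => L.getD i 0 + i + 1) ≤ bigN L :=
      le_max_right _ _
    omega

lemma one_le_bigN (L : List ℕ) : 1 ≤ bigN L := le_max_left _ _

lemma valid_bigN (L : List ℕ) (i : ℕ) (hi : i < bigN L) : L.getD i 0 + i < bigN L := by
  by_cases him : i < L.length
  · have hmem : i ∈ Finset.range L.length := Finset.mem_range.mpr him
    have h1 : L.getD i 0 + i + 1
        ≤ (Finset.range L.length).sup fun i => L.getD i 0 + i + 1 := Finset.le_sup (f := fun i => L.getD i 0 + i + 1) hmem
    have h2 : ((Finset.range L.length).sup fun i => L.getD i 0 + i + 1) ≤ bigN L :=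
      le_max_right _ _
    omega
  · rw [List.getD_eq_default _ _ (not_lt.mp him)]
    omega

lemma indec_bigN (L : List ℕ) (hpos : ∀ x ∈ L, x ≠ 0) (j : ℕ) (hj0 : 0 < j)
    (hjn : j < bigN L) : ∃ i : ℕ, i < j ∧ j ≤ L.getD i 0 + i := by
  have hsup2 : 2 ≤ (Finset.range L.length).sup fun i => L.getD i 0 + i + 1 := by
    unfold bigN at hjn
    omega
  have hne : (Finset.range L.length).Nonempty := by
    by_contra hc
    rw [Finset.not_nonempty_iff_eq_empty.mp hc] at hsup2
    simp at hsup2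
  obtain ⟨istar, histar, hsup⟩ := Finset.exists_mem_eq_sup _ hne
    (fun i => L.getD i 0 + i + 1)
  rw [Finset.mem_range] at histar
  have hsup' : ((Finset.range L.length).sup fun i => L.getD i 0 + i + 1)
      = L.getD istar 0 + istar + 1 := hsup
  have hjle : j ≤ L.getD istar 0 + istar := by
    unfold bigN at hjn
    omega
  by_cases hcase : istar < j
  · exact ⟨istar, hcase, hjle⟩
  · refine ⟨j - 1, by omega, ?_⟩
    have hjm : j - 1 < L.length := by omega
    have : L.getD (j - 1) 0 ≠ 0 := by
      rw [List.getD_eq_getElem _ _ hjm]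
      exact hpos _ (List.getElem_mem _)
    omega


lemma getD_ofFn {n : ℕ} (c : Fin n → ℕ) (i : ℕ) (hi : i < n) :
    (List.ofFn c).getD i 0 = c ⟨i, hi⟩ := by
  rw [List.getD_eq_getElem _ _ (by simpa using hi)]
  exact List.getElem_ofFn _

lemma getD_replicate_zero (k j : ℕ) : (List.replicate k (0 : ℕ)).getD j 0 = 0 := by
  by_cases h : j < k
  · rw [List.getD_eq_getElem _ _ (by simpa using h)]
    simp
  · exact List.getD_eq_default _ _ (by simpa using not_lt.mp h)

lemma ofFn_sorted {n : ℕ} (c : Fin n → ℕ)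
    (anti : ∀ i j : Fin n, i ≤ j → c j ≤ c i) : (List.ofFn c).Pairwise (· ≥ ·) := by
  refine List.pairwise_iff_getElem.mpr ?_
  intro i j hi hj hij
  simp only [List.length_ofFn] at hi hj
  simp only [List.getElem_ofFn]
  exact anti ⟨i, hi⟩ ⟨j, hj⟩ (le_of_lt hij)

lemma filter_length_le {n : ℕ} (c : Fin n → ℕ) :
    ((List.ofFn c).filter (fun x => x ≠ 0)).length ≤ n := by
  have := List.length_filter_le (fun x => decide (x ≠ 0)) (List.ofFn c)
  simpa [List.length_ofFn] using this

lemma bridge {n : ℕ} (c : Fin n → ℕ)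
    (anti : ∀ i j : Fin n, i ≤ j → c j ≤ c i) :
    (∀ (i : ℕ) (hi : i < n), i < ((List.ofFn c).filter (fun x => x ≠ 0)).length →
        ((List.ofFn c).filter (fun x => x ≠ 0)).getD i 0 = c ⟨i, hi⟩) ∧
    (∀ (i : ℕ) (hi : i < n), ((List.ofFn c).filter (fun x => x ≠ 0)).length ≤ i →
        c ⟨i, hi⟩ = 0) := by
  set X := List.ofFn c with hX
  set L0 := X.filter (fun x => x ≠ 0) with hL0
  have happ : L0 ++ List.replicate (X.length - L0.length) 0 = X :=
    sorted_filter_append X (ofFn_sorted c anti)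
  constructor
  · intro i hi him
    have h1 : L0.getD i 0 = (L0 ++ List.replicate (X.length - L0.length) 0).getD i 0 :=
      (List.getD_append _ _ _ _ him).symm
    rw [h1, happ, hX, getD_ofFn c i hi]
  · intro i hi him
    have h0 : X.getD i 0 = c ⟨i, hi⟩ := getD_ofFn c i hi
    rw [← h0, ← happ, List.getD_append_right _ _ _ _ him, getD_replicate_zero]

lemma bigN_eq {n : ℕ} (c : Fin n → ℕ) (hn : 1 ≤ n)
    (valid : ∀ i : Fin n, c i + (i : ℕ) < n)
    (anti : ∀ i j : Fin n, i ≤ j → c j ≤ c i)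
    (indec : ∀ j : ℕ, 0 < j → j < n → ∃ i : Fin n, (i : ℕ) < j ∧ j ≤ c i + (i : ℕ)) :
    bigN ((List.ofFn c).filter (fun x => x ≠ 0)) = n := by
  obtain ⟨hbr1, hbr2⟩ := bridge c anti
  set L0 := (List.ofFn c).filter (fun x => x ≠ 0) with hL0
  have hm : L0.length ≤ n := filter_length_le c
  apply _root_.le_antisymm
  · apply max_le hn
    apply Finset.sup_le
    intro i hi
    rw [Finset.mem_range] at hi
    have hin : i < n := lt_of_lt_of_le hi hm
    rw [hbr1 i hin hi]
    have := valid ⟨i, hin⟩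
    simpa using this
  · rcases eq_or_lt_of_le hn with h1 | h2
    · rw [← h1]; exact one_le_bigN L0
    · obtain ⟨i, hi1, hi2⟩ := indec (n - 1) (by omega) (by omega)
      have hci : c i ≠ 0 := by
        intro hc0
        rw [hc0] at hi2
        omega
      have him : (i : ℕ) < L0.length := by
        by_contra hcon
        exact hci (by
          have := hbr2 (i : ℕ) i.isLt (not_lt.mp hcon)
          simpa using this)
      have hle : L0.getD (i : ℕ) 0 + (i : ℕ) + 1
          ≤ (Finset.range L0.length).sup fun l => L0.getD l 0 + l + 1 :=
        Finset.le_sup (f := fun l => L0.getD l 0 + l + 1) (Finset.mem_range.mpr him)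
      have heq : L0.getD (i : ℕ) 0 = c i := by
        have := hbr1 (i : ℕ) i.isLt him
        simpa using this
      unfold bigN
      omega

lemma ofFn_getD_eq_append (L : List ℕ) (n : ℕ) (h : L.length ≤ n) :
    List.ofFn (fun i : Fin n => L.getD (i : ℕ) 0)
      = L ++ List.replicate (n - L.length) 0 := by
  apply List.ext_getElem
  · simp only [List.length_ofFn, List.length_append, List.length_replicate]
    omega
  · intro i hi1 hi2
    have hL : (List.ofFn (fun i : Fin n => L.getD (i : ℕ) 0))[i]'hi1 = L.getD i 0 :=
      List.getElem_ofFn _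
    have hR : (L ++ List.replicate (n - L.length) 0)[i]'hi2 = L.getD i 0 := by
      rw [← List.getD_eq_getElem _ 0 hi2]
      by_cases him : i < L.length
      · rw [List.getD_append _ _ _ _ him]
      · rw [List.getD_append_right _ _ _ _ (not_lt.mp him), getD_replicate_zero,
          List.getD_eq_default _ _ (not_lt.mp him)]
    rw [hL, hR]

lemma filter_ofFn_getD (L : List ℕ) (n : ℕ) (h : L.length ≤ n)
    (hpos : ∀ x ∈ L, x ≠ 0) :
    (List.ofFn (fun i : Fin n => L.getD (i : ℕ) 0)).filter (fun x => x ≠ 0) = L := by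
  rw [ofFn_getD_eq_append L n h, List.filter_append]
  have h1 : L.filter (fun x => x ≠ 0) = L := by
    apply List.filter_eq_self.mpr
    intro x hx
    simpa using hpos x hx
  have h2 : (List.replicate (n - L.length) (0 : ℕ)).filter (fun x => x ≠ 0) = [] := by
    apply List.filter_eq_nil_iff.mpr
    intro x hx
    rw [List.eq_of_mem_replicate hx]
    simp
  rw [h1, h2, List.append_nil]


abbrev PermSet (k : ℕ) := {p : Σ n : ℕ, Equiv.Perm (Fin n) //
    Indecomposable p.2 ∧ inversions p.2 = k ∧ Avoids132 p.2}

lemma sigma_perm_eq {m n : ℕ} (π : Equiv.Perm (Fin m)) (σ : Equiv.Perm (Fin n)) (h : m = n)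
    (hc : ∀ i : Fin m, invTable π i = invTable σ (Fin.cast h i)) :
    (⟨m, π⟩ : Σ l, Equiv.Perm (Fin l)) = ⟨n, σ⟩ := by
  subst h
  apply congrArg (Sigma.mk _)
  apply invTable_injective
  funext i
  have := hc i
  rwa [show Fin.cast rfl i = i from rfl] at this

noncomputable def permOfList (L : List ℕ) : Equiv.Perm (Fin (bigN L)) :=
  Classical.choose (exists_perm_of_code (fun i : Fin (bigN L) => L.getD (i : ℕ) 0)
    (fun i => valid_bigN L (i : ℕ) i.isLt))

lemma invTable_permOfList (L : List ℕ) (i : Fin (bigN L)) :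
    invTable (permOfList L) i = L.getD (i : ℕ) 0 :=
  Classical.choose_spec (exists_perm_of_code (fun i : Fin (bigN L) => L.getD (i : ℕ) 0)
    (fun i => valid_bigN L (i : ℕ) i.isLt)) i

lemma permOfList_avoids (L : List ℕ) (hs : L.Pairwise (· ≥ ·)) :
    Avoids132 (permOfList L) := by
  rw [avoids132_iff]
  intro i j hij
  rw [invTable_permOfList, invTable_permOfList]
  exact getD_antitone hs (i : ℕ) (j : ℕ) hij

lemma permOfList_indec (L : List ℕ) (hpos : ∀ x ∈ L, x ≠ 0) :
    Indecomposable (permOfList L) := by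
  refine ⟨one_le_bigN L, ?_⟩
  rw [decomposable_iff]
  rintro ⟨j, hj0, hjn, hall⟩
  obtain ⟨i, hi1, hi2⟩ := indec_bigN L hpos j hj0 hjn
  have := hall ⟨i, by omega⟩ hi1
  rw [invTable_permOfList] at this
  simp only at this
  omega

lemma permOfList_inversions (L : List ℕ) : inversions (permOfList L) = L.sum := by
  rw [inversions_eq_sum]
  have h1 : ∀ i : Fin (bigN L), invTable (permOfList L) i = L.getD (i : ℕ) 0 :=
    invTable_permOfList L
  rw [Finset.sum_congr rfl (fun i _ => h1 i)]
  rw [Fin.sum_univ_eq_sum_range (fun j => L.getD j 0) (bigN L)]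
  exact sum_range_getD L _ (length_le_bigN L)

def sortedList {k : ℕ} (P : Nat.Partition k) : List ℕ := (P.parts.sort (· ≤ ·)).reverse

lemma sortedList_sorted {k : ℕ} (P : Nat.Partition k) : (sortedList P).Pairwise (· ≥ ·) := by
  unfold sortedList
  rw [List.pairwise_reverse]
  exact Multiset.pairwise_sort P.parts (· ≤ ·)

lemma sortedList_coe {k : ℕ} (P : Nat.Partition k) :
    ((sortedList P : List ℕ) : Multiset ℕ) = P.parts := by
  unfold sortedList
  rw [Multiset.coe_reverse, Multiset.sort_eq]

lemma sortedList_pos {k : ℕ} (P : Nat.Partition k) : ∀ x ∈ sortedList P, x ≠ 0 := by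
  intro x hx
  have : x ∈ P.parts := by
    rw [← sortedList_coe P]
    exact hx
  have := P.parts_pos this
  omega

lemma sortedList_sum {k : ℕ} (P : Nat.Partition k) : (sortedList P).sum = k := by
  have h := congrArg Multiset.sum (sortedList_coe P)
  rw [Multiset.sum_coe] at h
  rw [h, P.parts_sum]

noncomputable def F {k : ℕ} (P : Nat.Partition k) : PermSet k := by
  refine ⟨⟨bigN (sortedList P), permOfList (sortedList P)⟩,
    permOfList_indec _ (sortedList_pos P), ?_, permOfList_avoids _ (sortedList_sorted P)⟩
  rw [permOfList_inversions, sortedList_sum]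

def G {k : ℕ} (Q : PermSet k) : Nat.Partition k where
  parts := ↑((List.ofFn (invTable Q.1.2)).filter (fun x => x ≠ 0))
  parts_pos := by
    intro i hi
    rw [Multiset.mem_coe, List.mem_filter] at hi
    have := hi.2
    simp only [ne_eq, decide_not, Bool.not_eq_true', decide_eq_false_iff_not] at this
    omega
  parts_sum := by
    rw [Multiset.sum_coe, sum_filter_ne_zero, List.sum_ofFn, ← inversions_eq_sum]
    exact Q.2.2.1

lemma GF {k : ℕ} (P : Nat.Partition k) : G (F P) = P := by
  apply Nat.Partition.ext
  show ↑((List.ofFn (invTable (permOfList (sortedList P)))).filter (fun x => x ≠ 0)) = P.parts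
  have h1 : (List.ofFn (invTable (permOfList (sortedList P))))
      = List.ofFn (fun i : Fin (bigN (sortedList P)) => (sortedList P).getD (i : ℕ) 0) := by
    congr 1
    funext i
    exact invTable_permOfList _ i
  rw [h1, filter_ofFn_getD _ _ (length_le_bigN _) (sortedList_pos P), sortedList_coe]

lemma FG {k : ℕ} (Q : PermSet k) : F (G Q) = Q := by
  obtain ⟨⟨n, π⟩, hind, hinv, havoid⟩ := Q
  have anti : ∀ i j : Fin n, i ≤ j → invTable π j ≤ invTable π i :=
    (avoids132_iff π).mp havoid
  have valid : ∀ i : Fin n, invTable π i + (i : ℕ) < n := invTable_lt π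
  have hn : 1 ≤ n := hind.1
  have indec : ∀ j : ℕ, 0 < j → j < n →
      ∃ i : Fin n, (i : ℕ) < j ∧ j ≤ invTable π i + (i : ℕ) := by
    intro j hj0 hjn
    have hnd := hind.2
    rw [decomposable_iff] at hnd
    push_neg at hnd
    obtain ⟨i, hi1, hi2⟩ := hnd j hj0 hjn
    exact ⟨i, hi1, hi2⟩
  set L0 := (List.ofFn (invTable π)).filter (fun x => x ≠ 0) with hL0
  -- the parts of G Q are ↑L0 and the sorted list is L0
  have hGparts : (G ⟨⟨n, π⟩, hind, hinv, havoid⟩).parts = ↑L0 := rfl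
  have hLeq : sortedList (G ⟨⟨n, π⟩, hind, hinv, havoid⟩) = L0 := by
    haveI : Std.Antisymm (fun a b : ℕ => a ≥ b) := ⟨fun a b h1 h2 => _root_.le_antisymm h2 h1⟩
    apply fun hp h1 h2 => List.Perm.eq_of_pairwise' (r := fun a b : ℕ => a ≥ b) h1 h2 hp
    · apply Multiset.coe_eq_coe.mp
      rw [sortedList_coe, hGparts]
    · exact sortedList_sorted _
    · exact List.Pairwise.filter _ (ofFn_sorted (invTable π) anti)
  apply Subtype.ext
  show (⟨bigN (sortedList (G ⟨⟨n, π⟩, hind, hinv, havoid⟩)),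
      permOfList (sortedList (G ⟨⟨n, π⟩, hind, hinv, havoid⟩))⟩ : Σ m, Equiv.Perm (Fin m))
      = ⟨n, π⟩
  rw [hLeq]
  have hN : bigN L0 = n := bigN_eq (invTable π) hn valid anti indec
  apply sigma_perm_eq _ _ hN
  intro i
  rw [invTable_permOfList]
  obtain ⟨hbr1, hbr2⟩ := bridge (invTable π) anti
  have hin : (i : ℕ) < n := hN ▸ i.isLt
  by_cases him : (i : ℕ) < L0.length
  · exact hbr1 (i : ℕ) hin him
  · have hb := hbr2 (i : ℕ) hin (not_lt.mp him)
    rw [List.getD_eq_default _ _ (not_lt.mp him)]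
    exact hb.symm

end Aux

/-- The number of indecomposable permutations with exactly `k` inversions avoiding
the pattern 132 equals the number of partitions of `k`. -/
theorem card_indecomposable_avoids132_eq_partitions (k : ℕ) :
    Nat.card {p : Σ n : ℕ, Equiv.Perm (Fin n) //
        Indecomposable p.2 ∧ inversions p.2 = k ∧ Avoids132 p.2}
      = Nat.card (Nat.Partition k) := by
  exact Nat.card_congr ⟨Aux.G, Aux.F, Aux.FG, Aux.GF⟩
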